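/- (Theorem: exponential convergence of the mean-field ODE, part 1.) Fix an integer K ≥ 2, λ > 0, μ ∈ [0,1], and p₁ > p₂ ≥ ⋯ ≥ p_K ≥ 0, and let y : [0,∞) → ℝ^{K+1} be a simplex-valued solution of the mean-field ODE system with y₁(0) > 0. Then for all t ≥ 0, y₁(t) ≥ 1 − 1 / ( (y₁(0)/(1 − y₁(0))) · exp(R t) + 1 ), where R = λ · min{ (1 − μ + μ/K) p₁, p₁ − p₂ }. -/

import Mathlib

open Finset Real

lemma mf_sum_split (K : ℕ) (f : ℕ → ℝ) :
    ∑ k ∈ Finset.range (K + 1), f k = f 0 + ∑ j ∈ Finset.Icc 1 K, f j := by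
  rw [← Finset.Ico_add_one_right_eq_Icc, Finset.range_eq_Ico,
    ← Finset.sum_Ico_consecutive f (Nat.zero_le 1) (by omega : 1 ≤ K + 1)]
  simp

lemma mf_sum_split2 (K : ℕ) (hK : 1 ≤ K) (f : ℕ → ℝ) :
    ∑ j ∈ Finset.Icc 1 K, f j = f 1 + ∑ j ∈ Finset.Icc 2 K, f j := by
  rw [← Finset.Ico_add_one_right_eq_Icc, ← Finset.Ico_add_one_right_eq_Icc,
    ← Finset.sum_Ico_consecutive f (by omega : 1 ≤ 2) (by omega : 2 ≤ K + 1)]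
  simp

lemma mf_p_le_p2 (K : ℕ) (p : ℕ → ℝ)
    (hpmono : ∀ j, 2 ≤ j → j < K → p (j + 1) ≤ p j) :
    ∀ j, 2 ≤ j → j ≤ K → p j ≤ p 2 := by
  intro j h2 hjK
  induction j, h2 using Nat.le_induction with
  | base => exact le_refl _
  | succ n hn ih => exact (hpmono n hn (by omega)).trans (ih (by omega))

lemma mf_pK_le (K : ℕ) (p : ℕ → ℝ)
    (hpmono : ∀ j, 2 ≤ j → j < K → p (j + 1) ≤ p j) :
    ∀ j, 2 ≤ j → j ≤ K → p K ≤ p j := by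
  suffices H : ∀ d j, 2 ≤ j → j + d ≤ K → p (j + d) ≤ p j by
    intro j h2 hjK
    have := H (K - j) j h2 (by omega)
    rwa [show j + (K - j) = K by omega] at this
  intro d
  induction d with
  | zero => intro j _ _; simp
  | succ d ih =>
    intro j h2 h
    have h1 : p (j + d + 1) ≤ p (j + d) := hpmono (j + d) (by omega) (by omega)
    have h2' : p (j + d) ≤ p j := ih j h2 (by omega)
    calc p (j + (d + 1)) = p (j + d + 1) := by ring_nf
    _ ≤ p (j + d) := h1
    _ ≤ p j := h2'

theorem meanfield_ode_exponential_convergence_part1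
    (K : ℕ) (hK : 2 ≤ K) (lam μ : ℝ) (hlam : 0 < lam) (hμ0 : 0 ≤ μ) (hμ1 : μ ≤ 1)
    (p : ℕ → ℝ) (hp12 : p 2 < p 1)
    (hpmono : ∀ j, 2 ≤ j → j < K → p (j + 1) ≤ p j) (hpK : 0 ≤ p K)
    (y : ℝ → ℕ → ℝ)
    (hode0 : ∀ t, 0 ≤ t → HasDerivAt (fun s => y s 0)
      (-(lam * y t 0 * ((μ / K) * ∑ j ∈ Finset.Icc 1 K, p j
        + (1 - μ) * ∑ j ∈ Finset.Icc 1 K, p j * y t j))) t)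
    (hodek : ∀ k, 1 ≤ k → k ≤ K → ∀ t, 0 ≤ t → HasDerivAt (fun s => y s k)
      (lam * y t 0 * (μ / K) * p k
        + lam * y t k * ((1 - μ) * p k * y t 0
          + ∑ j ∈ Finset.Icc 1 K, (p k - p j) * y t j)) t)
    (hsimplex : ∀ t, 0 ≤ t →
      (∀ k ≤ K, 0 ≤ y t k) ∧ ∑ k ∈ Finset.range (K + 1), y t k = 1)
    (hy1 : 0 < y 0 1)
    (R : ℝ) (hR : R = lam * min ((1 - μ + μ / K) * p 1) (p 1 - p 2)) :
    ∀ t, 0 ≤ t →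
      1 - 1 / ((y 0 1 / (1 - y 0 1)) * Real.exp (R * t) + 1) ≤ y t 1 := by
  -- basic facts about p, R, K
  have hKR : (0 : ℝ) < K := by exact_mod_cast (by omega : 0 < K)
  have hp2nn : 0 ≤ p 2 := hpK.trans (mf_pK_le K p hpmono 2 le_rfl hK)
  have hp1pos : 0 < p 1 := lt_of_le_of_lt hp2nn hp12
  have hμKnn : 0 ≤ μ / K := div_nonneg hμ0 hKR.le
  have hcoef : 0 < 1 - μ + μ / K := by
    by_cases hμ : μ = 1
    · have : (0:ℝ) < 1 / K := div_pos one_pos hKR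
      rw [hμ]; linarith
    · have : μ < 1 := lt_of_le_of_ne hμ1 hμ
      linarith
  have hRpos : 0 < R := by
    rw [hR]; exact mul_pos hlam (lt_min (mul_pos hcoef hp1pos) (by linarith))
  have hRle1 : R ≤ lam * ((1 - μ + μ / K) * p 1) := by
    rw [hR]; exact mul_le_mul_of_nonneg_left (min_le_left _ _) hlam.le
  have hRle2 : R ≤ lam * (p 1 - p 2) := by
    rw [hR]; exact mul_le_mul_of_nonneg_left (min_le_right _ _) hlam.le
  -- pointwise simplex facts
  have hnn : ∀ t, 0 ≤ t → ∀ k, k ≤ K → 0 ≤ y t k := fun t ht k hk => (hsimplex t ht).1 k hk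
  have hy0 : ∀ t, 0 ≤ t → 0 ≤ y t 0 := fun t ht => hnn t ht 0 (by omega)
  have hx0 : ∀ t, 0 ≤ t → 0 ≤ y t 1 := fun t ht => hnn t ht 1 (by omega)
  have hx1le : ∀ t, 0 ≤ t → y t 1 ≤ 1 := by
    intro t ht
    have h := Finset.single_le_sum (f := fun k => y t k)
      (fun i hi => hnn t ht i (Nat.lt_succ_iff.mp (Finset.mem_range.mp hi)))
      (Finset.mem_range.mpr (by omega : 1 < K + 1))
    rw [(hsimplex t ht).2] at h
    exact h
  have hsum' : ∀ t, 0 ≤ t → y t 0 + ∑ j ∈ Finset.Icc 1 K, y t j = 1 := by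
    intro t ht
    rw [← mf_sum_split]
    exact (hsimplex t ht).2
  -- key differential inequality
  have key : ∀ t, 0 ≤ t → R * (y t 1 * (1 - y t 1)) ≤
      lam * y t 0 * (μ / K) * p 1 + lam * y t 1 * ((1 - μ) * p 1 * y t 0
        + ∑ j ∈ Finset.Icc 1 K, (p 1 - p j) * y t j) := by
    intro t ht
    have hs2nn : 0 ≤ ∑ j ∈ Finset.Icc 2 K, y t j :=
      Finset.sum_nonneg fun j hj => hnn t ht j (Finset.mem_Icc.mp hj).2
    have hsplit : ∑ j ∈ Finset.Icc 1 K, y t j = y t 1 + ∑ j ∈ Finset.Icc 2 K, y t j :=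
      mf_sum_split2 K (by omega) _
    have h1mx : 1 - y t 1 = y t 0 + ∑ j ∈ Finset.Icc 2 K, y t j := by
      have := hsum' t ht
      rw [hsplit] at this
      linarith
    have hC : (p 1 - p 2) * (∑ j ∈ Finset.Icc 2 K, y t j)
        ≤ ∑ j ∈ Finset.Icc 1 K, (p 1 - p j) * y t j := by
      rw [mf_sum_split2 K (by omega) (fun j => (p 1 - p j) * y t j), Finset.mul_sum]
      simp only [sub_self, zero_mul, zero_add]
      refine Finset.sum_le_sum fun j hj => ?_
      have h1 := (Finset.mem_Icc.mp hj).1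
      have h2 := (Finset.mem_Icc.mp hj).2
      exact mul_le_mul_of_nonneg_right
        (by have := mf_p_le_p2 K p hpmono j h1 h2; linarith) (hnn t ht j h2)
    have hy0' := hy0 t ht
    have hx0' := hx0 t ht
    have hx1' := hx1le t ht
    calc R * (y t 1 * (1 - y t 1))
        = R * (y t 1 * y t 0) + R * (y t 1 * ∑ j ∈ Finset.Icc 2 K, y t j) := by
          rw [h1mx]; ring
      _ ≤ lam * ((1 - μ + μ / K) * p 1) * (y t 1 * y t 0)
          + lam * (p 1 - p 2) * (y t 1 * ∑ j ∈ Finset.Icc 2 K, y t j) :=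
          add_le_add (mul_le_mul_of_nonneg_right hRle1 (mul_nonneg hx0' hy0'))
            (mul_le_mul_of_nonneg_right hRle2 (mul_nonneg hx0' hs2nn))
      _ = (lam * y t 0 * (μ / K) * p 1) * y t 1 + lam * y t 1 * ((1 - μ) * p 1 * y t 0)
          + lam * y t 1 * ((p 1 - p 2) * ∑ j ∈ Finset.Icc 2 K, y t j) := by ring
      _ ≤ (lam * y t 0 * (μ / K) * p 1) * 1 + lam * y t 1 * ((1 - μ) * p 1 * y t 0)
          + lam * y t 1 * (∑ j ∈ Finset.Icc 1 K, (p 1 - p j) * y t j) := by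
          refine add_le_add (add_le_add ?_ le_rfl) ?_
          · exact mul_le_mul_of_nonneg_left hx1'
              (mul_nonneg (mul_nonneg (mul_nonneg hlam.le hy0') hμKnn) hp1pos.le)
          · exact mul_le_mul_of_nonneg_left hC (mul_nonneg hlam.le hx0')
      _ = lam * y t 0 * (μ / K) * p 1 + lam * y t 1 * ((1 - μ) * p 1 * y t 0
          + ∑ j ∈ Finset.Icc 1 K, (p 1 - p j) * y t j) := by ring
  -- the derivative of y · 1
  have hderiv : ∀ t, 0 ≤ t → HasDerivAt (fun s => y s 1)
      (lam * y t 0 * (μ / K) * p 1 + lam * y t 1 * ((1 - μ) * p 1 * y t 0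
        + ∑ j ∈ Finset.Icc 1 K, (p 1 - p j) * y t j)) t :=
    fun t ht => hodek 1 le_rfl (by omega) t ht
  have hcont : ContinuousOn (fun s => y s 1) (Set.Ici (0 : ℝ)) :=
    fun t ht => ((hderiv t ht).continuousAt).continuousWithinAt
  have hmono : MonotoneOn (fun s => y s 1) (Set.Ici (0 : ℝ)) := by
    apply monotoneOn_of_deriv_nonneg (convex_Ici 0) hcont
    · intro t ht
      rw [interior_Ici] at ht
      exact ((hderiv t ht.le).differentiableAt).differentiableWithinAt
    · intro t ht
      rw [interior_Ici] at ht
      rw [(hderiv t ht.le).deriv]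
      have hk := key t ht.le
      have : 0 ≤ R * (y t 1 * (1 - y t 1)) :=
        mul_nonneg hRpos.le (mul_nonneg (hx0 t ht.le) (by linarith [hx1le t ht.le]))
      linarith
  have hxpos : ∀ t, 0 ≤ t → 0 < y t 1 :=
    fun t ht => lt_of_lt_of_le hy1 (hmono Set.self_mem_Ici ht ht)
  by_cases hx01 : y 0 1 < 1
  · -- main case
    set g : ℝ → ℝ := fun s => (1 - y s 1) / y s 1 * Real.exp (R * s) with hg
    have hgderiv : ∀ t, 0 ≤ t → HasDerivAt g
        ((Real.exp (R * t) / (y t 1) ^ 2) * (R * (y t 1 * (1 - y t 1))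
          - (lam * y t 0 * (μ / K) * p 1 + lam * y t 1 * ((1 - μ) * p 1 * y t 0
            + ∑ j ∈ Finset.Icc 1 K, (p 1 - p j) * y t j)))) t := by
      intro t ht
      have hxp := hxpos t ht
      have h1 : HasDerivAt (fun s => 1 - y s 1)
          (-(lam * y t 0 * (μ / K) * p 1 + lam * y t 1 * ((1 - μ) * p 1 * y t 0
            + ∑ j ∈ Finset.Icc 1 K, (p 1 - p j) * y t j))) t := by
        exact (hderiv t ht).const_sub 1
      have h2 := h1.div (hderiv t ht) (ne_of_gt hxp)
      have h3 : HasDerivAt (fun s => Real.exp (R * s)) (Real.exp (R * t) * R) t := by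
        simpa using ((hasDerivAt_id t).const_mul R).exp
      have h4 := h2.mul h3
      have heq : (-(lam * y t 0 * (μ / K) * p 1 + lam * y t 1 * ((1 - μ) * p 1 * y t 0
            + ∑ j ∈ Finset.Icc 1 K, (p 1 - p j) * y t j)) * y t 1
            - (1 - y t 1) * (lam * y t 0 * (μ / K) * p 1 + lam * y t 1 * ((1 - μ) * p 1 * y t 0
            + ∑ j ∈ Finset.Icc 1 K, (p 1 - p j) * y t j))) / (y t 1) ^ 2 * Real.exp (R * t)
          + (1 - y t 1) / y t 1 * (Real.exp (R * t) * R)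
          = (Real.exp (R * t) / (y t 1) ^ 2) * (R * (y t 1 * (1 - y t 1))
          - (lam * y t 0 * (μ / K) * p 1 + lam * y t 1 * ((1 - μ) * p 1 * y t 0
            + ∑ j ∈ Finset.Icc 1 K, (p 1 - p j) * y t j))) := by
        field_simp
        ring
      exact h4.congr_deriv heq
    have hganti : AntitoneOn g (Set.Ici (0 : ℝ)) := by
      apply antitoneOn_of_deriv_nonpos (convex_Ici 0)
      · intro t ht
        exact ((hgderiv t ht).continuousAt).continuousWithinAt
      · intro t ht
        rw [interior_Ici] at ht
        exact ((hgderiv t ht.le).differentiableAt).differentiableWithinAt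
      · intro t ht
        rw [interior_Ici] at ht
        rw [(hgderiv t ht.le).deriv]
        have hk := key t ht.le
        exact mul_nonpos_of_nonneg_of_nonpos (by positivity) (by linarith)
    intro t ht
    have hgle : g t ≤ g 0 := hganti Set.self_mem_Ici ht ht
    simp only [hg, mul_zero, Real.exp_zero, mul_one] at hgle
    -- hgle : (1 - y t 1) / y t 1 * Real.exp (R * t) ≤ (1 - y 0 1) / y 0 1
    have ha := hy1
    have hb := hxpos t ht
    have hE := Real.exp_pos (R * t)
    have h1a : 0 < 1 - y 0 1 := by linarith
    have hmain : (1 - y t 1) * Real.exp (R * t) * y 0 1 ≤ (1 - y 0 1) * y t 1 := by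
      rw [div_mul_eq_mul_div, div_le_div_iff₀ hb ha] at hgle
      linarith
    have hden : 0 < y 0 1 / (1 - y 0 1) * Real.exp (R * t) + 1 := by
      have := mul_pos (div_pos ha h1a) hE
      linarith
    have h2 : (1 - y t 1) * (y 0 1 / (1 - y 0 1) * Real.exp (R * t) + 1) ≤ 1 := by
      have expand : (1 - y t 1) * (y 0 1 / (1 - y 0 1) * Real.exp (R * t) + 1)
          = ((1 - y t 1) * Real.exp (R * t) * y 0 1 + (1 - y 0 1) * (1 - y t 1)) / (1 - y 0 1) := by
        field_simp
      rw [expand, div_le_one h1a]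
      nlinarith [hmain]
    have h3 : 1 - y t 1 ≤ 1 / (y 0 1 / (1 - y 0 1) * Real.exp (R * t) + 1) :=
      (le_div_iff₀ hden).mpr h2
    linarith
  · -- boundary case y 0 1 = 1
    push_neg at hx01
    have h1 : y 0 1 = 1 := le_antisymm (hx1le 0 le_rfl) hx01
    intro t ht
    rw [h1]
    norm_num
    exact hx0 t ht
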